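/- A matrix M = [m_{ij}] ∈ Mat_{m,n}(Z≥0) satisfies e_i^row(M) = ∅ for all 1 ≤ i ≤ m−1 and e_j^col(M) = ∅ for all 1 ≤ j ≤ n−1 (i.e., M is a highest-weight vertex of the full matrix bicrystal) if and only if there exist nonnegative integers a_1, …, a_{min(m,n)} such that m_{ij} = a_{i+j−1} whenever i+j−1 ≤ min(m,n), and m_{ij} = 0 whenever i+j−1 > min(m,n). In particular, each weight pair occurring for a highest-weight matrix satisfies: the row-sum sequence equals the column-sum sequence, and it is a partition with at most min(m,n) parts. -/

import Mathlib

namespace FilteredRSK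

/-! ## Words and crystal operators (via parenthesis matching) -/

/-- Scan the word `w`, treating each letter `i` as a `)` and each letter `i+1` as a `(`,
matching parentheses in the usual way.  Returns the pair consisting of the list of positions
of unmatched `)` (rightmost first) and the stack of positions of unmatched `(`
(most recent first, so the leftmost unmatched `(` is the last entry). -/
def bracketScan (i : ℕ) (w : List ℕ) : List ℕ × List ℕ :=
  (w.zipIdx.map Prod.swap).foldl
    (fun (st : List ℕ × List ℕ) (p : ℕ × ℕ) =>
      if p.2 = i + 1 then (st.1, p.1 :: st.2)
      else if p.2 = i then
        match st.2 with
        | [] => (p.1 :: st.1, [])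
        | _ :: rest => (st.1, rest)
      else st)
    ([], [])

/-- Position of the rightmost unmatched `)` of `bracket_i(w)`, if any. -/
def fPos (i : ℕ) (w : List ℕ) : Option ℕ := (bracketScan i w).1.head?

/-- Position of the leftmost unmatched `(` of `bracket_i(w)`, if any. -/
def ePos (i : ℕ) (w : List ℕ) : Option ℕ := (bracketScan i w).2.getLast?

/-- The crystal lowering operator `f_i`: change the letter `i` at the rightmost unmatched `)`
to `i+1`; output `∅` (i.e. `none`) if there is no unmatched `)`. -/
def fWord (i : ℕ) (w : List ℕ) : Option (List ℕ) := (fPos i w).map fun p => w.set p (i + 1)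

/-- The crystal raising operator `e_i`: change the letter `i+1` at the leftmost unmatched `(`
to `i`; output `∅` (i.e. `none`) if there is no unmatched `(`. -/
def eWord (i : ℕ) (w : List ℕ) : Option (List ℕ) := (ePos i w).map fun p => w.set p i

/-! ## Tableaux -/

/-- A tableau is a list of rows (top to bottom).  Its column reading word reads each column
bottom-to-top, columns left to right. -/
def readingWord (T : List (List ℕ)) : List ℕ :=
  (List.range (T.headD []).length).flatMap fun j => (T.filterMap fun row => row[j]?).reverse

/-- Semistandardness: all rows nonempty, rows weakly increase, row lengths weakly decrease,
and columns strictly increase. -/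
def IsSSYT (T : List (List ℕ)) : Prop :=
  (∀ row ∈ T, row ≠ []) ∧
  (∀ row ∈ T, row.Chain' (· ≤ ·)) ∧
  T.Chain' (fun row row' => row'.length ≤ row.length ∧
    ∀ j < row'.length, row.getD j 0 < row'.getD j 0)

/-- All entries of the tableau `T` lie in the interval `[a, b]`. -/
def entriesIn (T : List (List ℕ)) (a b : ℕ) : Prop := ∀ row ∈ T, ∀ x ∈ row, a ≤ x ∧ x ≤ b

/-- The shape of a tableau: the list of its row lengths. -/
def shape (T : List (List ℕ)) : List ℕ := T.map List.length

/-- A partition: a weakly decreasing list of positive integers. -/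
def IsPartition (lam : List ℕ) : Prop :=
  lam.Chain' (fun x y => y ≤ x) ∧ ∀ x ∈ lam, 0 < x

/-- Row insertion of `x` into a single row: replace the first entry strictly larger than `x`
(and bump it out), or append `x` at the end. -/
def insertRow (row : List ℕ) (x : ℕ) : List ℕ × Option ℕ :=
  match row.findIdx? (fun y => decide (x < y)) with
  | none => (row ++ [x], none)
  | some k => (row.set k x, row[k]?)

/-- Row insertion of a letter into a tableau. -/
def insertTab : List (List ℕ) → ℕ → List (List ℕ)
  | [], x => [[x]]
  | row :: rest, x =>
    match insertRow row x with
    | (row', none) => row' :: rest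
    | (row', some y) => row' :: insertTab rest y

/-- The insertion tableau of a word, obtained by successive row insertion of its letters. -/
def tabOf (w : List ℕ) : List (List ℕ) := w.foldl insertTab []

/-- The highest-weight tableau of shape `lam` with entries from `[a, b]`:
row `i` (0-indexed) is constantly filled with `a + i`. -/
def highestTab (lam : List ℕ) (a : ℕ) : List (List ℕ) :=
  lam.mapIdx fun i len => List.replicate len (a + i)

/-! ## Knuth equivalence -/

/-- Elementary Knuth moves. -/
inductive KnuthStep : List ℕ → List ℕ → Prop
  | yzx (u v : List ℕ) (x y z : ℕ) (h1 : x < y) (h2 : y ≤ z) :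
      KnuthStep (u ++ y :: z :: x :: v) (u ++ y :: x :: z :: v)
  | zxy (u v : List ℕ) (x y z : ℕ) (h1 : x ≤ y) (h2 : y < z) :
      KnuthStep (u ++ z :: x :: y :: v) (u ++ x :: z :: y :: v)

/-- Knuth equivalence: the equivalence relation generated by elementary Knuth moves. -/
def KnuthEquiv : List ℕ → List ℕ → Prop := Relation.EqvGen KnuthStep

/-- The Knuth equivalence class of a word. -/
def KClass (w : List ℕ) : Set (List ℕ) := {v | KnuthEquiv w v}

open Classical in
/-- A representative of a (nonempty) set of words. -/
noncomputable def classRep (C : Set (List ℕ)) : List ℕ :=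
  if h : C.Nonempty then h.some else []

/-- The weight of a Knuth class, defined via a representative. -/
noncomputable def classWt (C : Set (List ℕ)) : Multiset ℕ := ↑(classRep C)

/-- The insertion tableau of a Knuth class (as the reading word of the tableau),
defined via a representative. -/
noncomputable def classTab (C : Set (List ℕ)) : List ℕ := readingWord (tabOf (classRep C))

/-! ## Pre-crystal graphs -/

/-- A pre-crystal graph: a directed graph with edge labels in `L` and
vertex weights in `W`, together with a distinguished set of vertices. -/
structure PCG (V : Type*) (L : Type*) (W : Type*) where
  verts : Set V
  wt : V → W
  E : L → V → V → Prop

namespace PCG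

variable {V V' L L' W W' : Type*}

/-- Underlying undirected adjacency between vertices. -/
def Adj (G : PCG V L W) (u v : V) : Prop :=
  u ∈ G.verts ∧ v ∈ G.verts ∧ ∃ l, G.E l u v ∨ G.E l v u

/-- `u` and `v` lie in the same connected component. -/
def Reach (G : PCG V L W) : V → V → Prop := Relation.ReflTransGen G.Adj

/-- The connected component of `v` in `G`, as a pre-crystal graph. -/
def comp (G : PCG V L W) (v : V) : PCG V L W where
  verts := {u | u ∈ G.verts ∧ G.Reach v u}
  wt := G.wt
  E := G.E

/-- A pre-crystal graph homomorphism (with weights translated along `ω`):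
a vertex map preserving weights and labelled edges. -/
def IsHomVia (G : PCG V L W) (H : PCG V' L W') (ω : W → W') (f : V → V') : Prop :=
  (∀ v ∈ G.verts, f v ∈ H.verts) ∧
  (∀ v ∈ G.verts, H.wt (f v) = ω (G.wt v)) ∧
  (∀ (l : L), ∀ u ∈ G.verts, ∀ v ∈ G.verts, G.E l u v → H.E l (f u) (f v))

/-- A local isomorphism of pre-crystal graphs: a homomorphism whose restriction to each
connected component of `G` is an isomorphism onto a connected component of `H`. -/
def IsLocalIsoVia (G : PCG V L W) (H : PCG V' L W') (ω : W → W') (f : V → V') : Prop :=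
  IsHomVia G H ω f ∧
  (∀ u ∈ G.verts, ∀ v ∈ G.verts, G.Reach u v → f u = f v → u = v) ∧
  (∀ u ∈ G.verts, ∀ v' ∈ H.verts, H.Reach (f u) v' → ∃ v ∈ G.verts, G.Reach u v ∧ f v = v') ∧
  (∀ (l : L), ∀ u ∈ G.verts, ∀ v ∈ G.verts, G.Reach u v → H.E l (f u) (f v) → G.E l u v)

/-- An isomorphism of pre-crystal graphs. -/
def IsIsoVia (G : PCG V L W) (H : PCG V' L W') (ω : W → W') (f : V → V') : Prop :=
  IsHomVia G H ω f ∧ Set.BijOn f G.verts H.verts ∧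
  (∀ (l : L), ∀ u ∈ G.verts, ∀ v ∈ G.verts, H.E l (f u) (f v) → G.E l u v)

/-- Two pre-crystal graphs are isomorphic (with weights identified along `ω`). -/
def IsomorphicVia (G : PCG V L W) (H : PCG V' L W') (ω : W → W') : Prop :=
  ∃ f, IsIsoVia G H ω f

/-- The Cartesian product of two pre-crystal graphs; edge labels form the disjoint union
of the two label sets, and weights are concatenated. -/
def prod (G : PCG V L W) (H : PCG V' L' W') : PCG (V × V') (L ⊕ L') (W × W') where
  verts := {p | p.1 ∈ G.verts ∧ p.2 ∈ H.verts}
  wt := fun p => (G.wt p.1, H.wt p.2)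
  E := fun l p q =>
    match l with
    | Sum.inl a => G.E a p.1 q.1 ∧ p.2 = q.2
    | Sum.inr b => H.E b p.2 q.2 ∧ p.1 = q.1

/-- The Cartesian product of a finite family of pre-crystal graphs sharing a common ambient
label set (with disjoint effective labels, as for crystals of words on disjoint intervals):
an edge labelled `l` acts in a single coordinate and fixes all others. -/
def pi {r : ℕ} (G : Fin r → PCG V L W) : PCG (Fin r → V) L (Fin r → W) where
  verts := {p | ∀ k, p k ∈ (G k).verts}
  wt := fun p k => (G k).wt (p k)
  E := fun l p q => ∃ k, (G k).E l (p k) (q k) ∧ ∀ k', k' ≠ k → p k' = q k'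

end PCG

/-! ## Word, tableau and Knuth crystal graphs -/

/-- The word crystal graph `W_{[a,b]}`: vertices are the words on the alphabet `[a,b]`,
the weight of a word is its multiset of letters (recording the number of occurrences of
each letter), and there is an edge `w →ᵢ v` iff `v = f_i(w)` (for `a ≤ i < b`). -/
def WordGraph (a b : ℕ) : PCG (List ℕ) ℕ (Multiset ℕ) where
  verts := {w | ∀ x ∈ w, a ≤ x ∧ x ≤ b}
  wt := fun w => ↑w
  E := fun i u v => a ≤ i ∧ i < b ∧ fWord i u = some v

/-- The disjoint union `⊕_λ B_{λ,[a,b]}` of all tableau crystal graphs with entries in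
`[a,b]`: the induced subgraph of `W_{[a,b]}` on reading words of semistandard tableaux. -/
def TabWordGraph (a b : ℕ) : PCG (List ℕ) ℕ (Multiset ℕ) where
  verts := {w | ∃ T, IsSSYT T ∧ entriesIn T a b ∧ readingWord T = w}
  wt := fun w => ↑w
  E := fun i u v => a ≤ i ∧ i < b ∧ fWord i u = some v

/-- The tableau crystal graph `B_{λ,[a,b]}`: the induced subgraph of `W_{[a,b]}` on the
reading words of semistandard tableaux of shape `λ` with entries in `[a,b]`. -/
def BGraph (lam : List ℕ) (a b : ℕ) : PCG (List ℕ) ℕ (Multiset ℕ) where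
  verts := {w | ∃ T, IsSSYT T ∧ shape T = lam ∧ entriesIn T a b ∧ readingWord T = w}
  wt := fun w => ↑w
  E := fun i u v => a ≤ i ∧ i < b ∧ fWord i u = some v

/-- The Knuth crystal graph `K_{[a,b]}`: vertices are Knuth equivalence classes of words on
`[a,b]`, weights via representatives, with an edge `C →ᵢ C'` iff some representatives
`w ∈ C`, `w' ∈ C'` satisfy `w' = f_i(w)`. -/
noncomputable def KnuthGraph (a b : ℕ) : PCG (Set (List ℕ)) ℕ (Multiset ℕ) where
  verts := {C | ∃ w, (∀ x ∈ w, a ≤ x ∧ x ≤ b) ∧ C = KClass w}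
  wt := classWt
  E := fun i C C' => ∃ w ∈ C, ∃ w' ∈ C', a ≤ i ∧ i < b ∧ fWord i w = some w'

/-! ## Filtrations -/

/-- `ι` enumerates a filtration `0 = i₀ < i₁ < ⋯ < i_r = m` of `[0, m]`. -/
def IsFiltration (m : ℕ) {r : ℕ} (ι : Fin (r + 1) → ℕ) : Prop :=
  StrictMono ι ∧ ι 0 = 0 ∧ ι (Fin.last r) = m

/-- The subword of `w` consisting of all letters in the interval `[lo + 1, hi]`. -/
def blockFilter (lo hi : ℕ) (w : List ℕ) : List ℕ :=
  w.filter fun x => decide (lo + 1 ≤ x ∧ x ≤ hi)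

/-- The `I`-filtration of a word: the tuple of subwords on the letter intervals
`[i_{k-1}+1, i_k]`. -/
def filterWord {r : ℕ} (ι : Fin (r + 1) → ℕ) (w : List ℕ) : Fin r → List ℕ :=
  fun k => blockFilter (ι k.castSucc) (ι k.succ) w

/-- The canonical splitting of a weight (a multiset of letters) along the intervals of a
filtration. -/
def splitWt {r : ℕ} (ι : Fin (r + 1) → ℕ) (s : Multiset ℕ) : Fin r → Multiset ℕ :=
  fun k => s.filter fun x => ι k.castSucc + 1 ≤ x ∧ x ≤ ι k.succ

/-- The `I`-filtered word crystal graph `W^I_m`: the subgraph of `W_m = W_{[1,m]}` obtained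
by deleting all edges labelled by elements of `I`. -/
def FilteredWordGraph (m : ℕ) (I : Set ℕ) : PCG (List ℕ) ℕ (Multiset ℕ) where
  verts := {w | ∀ x ∈ w, 1 ≤ x ∧ x ≤ m}
  wt := fun w => ↑w
  E := fun i u v => i ∉ I ∧ 1 ≤ i ∧ i < m ∧ fWord i u = some v

/-- The `I`-filtered Knuth crystal graph `K^I_m`: the quotient of `W^I_m` by Knuth
equivalence. -/
noncomputable def FilteredKnuthGraph (m : ℕ) (I : Set ℕ) :
    PCG (Set (List ℕ)) ℕ (Multiset ℕ) where
  verts := {C | ∃ w, (∀ x ∈ w, 1 ≤ x ∧ x ≤ m) ∧ C = KClass w}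
  wt := classWt
  E := fun i C C' => i ∉ I ∧ ∃ w ∈ C, ∃ w' ∈ C', 1 ≤ i ∧ i < m ∧ fWord i w = some w'

/-- The product `W_{[1,i₁]} □ W_{[i₁+1,i₂]} □ ⋯ □ W_{[i_{r-1}+1,m]}`. -/
def WordPiGraph {r : ℕ} (ι : Fin (r + 1) → ℕ) :
    PCG (Fin r → List ℕ) ℕ (Fin r → Multiset ℕ) :=
  PCG.pi fun k => WordGraph (ι k.castSucc + 1) (ι k.succ)

/-- The product `K_{[1,i₁]} □ K_{[i₁+1,i₂]} □ ⋯ □ K_{[i_{r-1}+1,m]}`. -/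
noncomputable def KnuthPiGraph {r : ℕ} (ι : Fin (r + 1) → ℕ) :
    PCG (Fin r → Set (List ℕ)) ℕ (Fin r → Multiset ℕ) :=
  PCG.pi fun k => KnuthGraph (ι k.castSucc + 1) (ι k.succ)

/-- The disjoint union, over all `I`-filtered partition-tuples `λ`, of the filtered tableau
crystal graphs `B_{λ,m} = B_{λ⁽¹⁾,[1,i₁]} □ ⋯ □ B_{λ⁽ʳ⁾,[i_{r-1}+1,m]}`. -/
def TabPiGraph {r : ℕ} (ι : Fin (r + 1) → ℕ) :
    PCG (Fin r → List ℕ) ℕ (Fin r → Multiset ℕ) :=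
  PCG.pi fun k => TabWordGraph (ι k.castSucc + 1) (ι k.succ)

/-- The `I`-filtered tableau crystal graph `B_{λ,m}` of shape-tuple `λ`. -/
def BPiGraph {r : ℕ} (ι : Fin (r + 1) → ℕ) (lam : Fin r → List ℕ) :
    PCG (Fin r → List ℕ) ℕ (Fin r → Multiset ℕ) :=
  PCG.pi fun k => BGraph (lam k) (ι k.castSucc + 1) (ι k.succ)

/-- The map on Knuth classes induced by the `I`-filtration (via a representative). -/
noncomputable def classFilter {r : ℕ} (ι : Fin (r + 1) → ℕ) (C : Set (List ℕ)) :
    Fin r → Set (List ℕ) :=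
  fun k => KClass (filterWord ι (classRep C) k)

/-- An `I`-filtered partition-tuple: each `λ⁽ᵏ⁾` is a partition with at most
`i_k - i_{k-1}` rows. -/
def IsFilteredShape {r : ℕ} (ι : Fin (r + 1) → ℕ) (lam : Fin r → List ℕ) : Prop :=
  ∀ k, IsPartition (lam k) ∧ (lam k).length ≤ ι k.succ - ι k.castSucc

/-- The highest-weight tableau-tuple of shape-tuple `λ`: its `k`-th component is the
highest-weight tableau of shape `λ⁽ᵏ⁾` with entries from `[i_{k-1}+1, i_k]`. -/
def highestTabs {r : ℕ} (ι : Fin (r + 1) → ℕ) (lam : Fin r → List ℕ) :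
    Fin r → List (List ℕ) :=
  fun k => highestTab (lam k) (ι k.castSucc + 1)

/-! ## Matrices, row/column words and bicrystal operators -/

/-- The row word of a nonnegative integer matrix: record `M i j` copies of the (1-based) row
index `i + 1` for each entry, reading columns top-to-bottom, left to right. -/
def rowWord {m n : ℕ} (M : Matrix (Fin m) (Fin n) ℕ) : List ℕ :=
  (List.finRange n).flatMap fun j => (List.finRange m).flatMap fun i =>
    List.replicate (M i j) ((i : ℕ) + 1)

/-- The column word: record `M i j` copies of the (1-based) column index `j + 1` for each
entry, reading rows left-to-right, top to bottom. -/
def colWord {m n : ℕ} (M : Matrix (Fin m) (Fin n) ℕ) : List ℕ :=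
  (List.finRange m).flatMap fun i => (List.finRange n).flatMap fun j =>
    List.replicate (M i j) ((j : ℕ) + 1)

/-- The list of matrix cells producing the successive letters of `rowWord M`. -/
def rowCells {m n : ℕ} (M : Matrix (Fin m) (Fin n) ℕ) : List (Fin m × Fin n) :=
  (List.finRange n).flatMap fun j => (List.finRange m).flatMap fun i =>
    List.replicate (M i j) (i, j)

/-- The list of matrix cells producing the successive letters of `colWord M`. -/
def colCells {m n : ℕ} (M : Matrix (Fin m) (Fin n) ℕ) : List (Fin m × Fin n) :=
  (List.finRange m).flatMap fun i => (List.finRange n).flatMap fun j =>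
    List.replicate (M i j) (i, j)

/-- Subtract `1` at the cell `c` and add `1` at the cell directly below. -/
def shiftDown {m n : ℕ} (M : Matrix (Fin m) (Fin n) ℕ) (c : Fin m × Fin n) :
    Matrix (Fin m) (Fin n) ℕ := fun a b =>
  if a = c.1 ∧ b = c.2 then M a b - 1
  else if (a : ℕ) = (c.1 : ℕ) + 1 ∧ b = c.2 then M a b + 1
  else M a b

/-- Subtract `1` at the cell `c` and add `1` at the cell directly above. -/
def shiftUp {m n : ℕ} (M : Matrix (Fin m) (Fin n) ℕ) (c : Fin m × Fin n) :
    Matrix (Fin m) (Fin n) ℕ := fun a b =>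
  if a = c.1 ∧ b = c.2 then M a b - 1
  else if (a : ℕ) + 1 = (c.1 : ℕ) ∧ b = c.2 then M a b + 1
  else M a b

/-- Subtract `1` at the cell `c` and add `1` at the cell directly to the right. -/
def shiftRight {m n : ℕ} (M : Matrix (Fin m) (Fin n) ℕ) (c : Fin m × Fin n) :
    Matrix (Fin m) (Fin n) ℕ := fun a b =>
  if a = c.1 ∧ b = c.2 then M a b - 1
  else if a = c.1 ∧ (b : ℕ) = (c.2 : ℕ) + 1 then M a b + 1
  else M a b

/-- Subtract `1` at the cell `c` and add `1` at the cell directly to the left. -/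
def shiftLeft {m n : ℕ} (M : Matrix (Fin m) (Fin n) ℕ) (c : Fin m × Fin n) :
    Matrix (Fin m) (Fin n) ℕ := fun a b =>
  if a = c.1 ∧ b = c.2 then M a b - 1
  else if a = c.1 ∧ (b : ℕ) + 1 = (c.2 : ℕ) then M a b + 1
  else M a b

/-- The row bicrystal lowering operator `f_i^row`, transporting `f_i` through `rowWord`. -/
def fRow {m n : ℕ} (i : ℕ) (M : Matrix (Fin m) (Fin n) ℕ) :
    Option (Matrix (Fin m) (Fin n) ℕ) :=
  (fPos i (rowWord M)).bind fun p => ((rowCells M)[p]?).map fun c => shiftDown M c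

/-- The row bicrystal raising operator `e_i^row`, transporting `e_i` through `rowWord`. -/
def eRow {m n : ℕ} (i : ℕ) (M : Matrix (Fin m) (Fin n) ℕ) :
    Option (Matrix (Fin m) (Fin n) ℕ) :=
  (ePos i (rowWord M)).bind fun p => ((rowCells M)[p]?).map fun c => shiftUp M c

/-- The column bicrystal lowering operator `f_j^col`, transporting `f_j` through `colWord`. -/
def fCol {m n : ℕ} (j : ℕ) (M : Matrix (Fin m) (Fin n) ℕ) :
    Option (Matrix (Fin m) (Fin n) ℕ) :=
  (fPos j (colWord M)).bind fun p => ((colCells M)[p]?).map fun c => shiftRight M c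

/-- The column bicrystal raising operator `e_j^col`, transporting `e_j` through `colWord`. -/
def eCol {m n : ℕ} (j : ℕ) (M : Matrix (Fin m) (Fin n) ℕ) :
    Option (Matrix (Fin m) (Fin n) ℕ) :=
  (ePos j (colWord M)).bind fun p => ((colCells M)[p]?).map fun c => shiftLeft M c

/-- The pre-crystal graph `M^row_{m,n}`: vertices are all matrices in `Mat_{m,n}(ℤ≥0)`,
weights are row-sums (the weight of the row word), edges `M →ᵢ f_i^row(M)`. -/
def MRowGraph (m n : ℕ) : PCG (Matrix (Fin m) (Fin n) ℕ) ℕ (Multiset ℕ) where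
  verts := Set.univ
  wt := fun M => ↑(rowWord M)
  E := fun i M M' => 1 ≤ i ∧ i < m ∧ fRow i M = some M'

/-- The pre-crystal graph `M^col_{m,n}`. -/
def MColGraph (m n : ℕ) : PCG (Matrix (Fin m) (Fin n) ℕ) ℕ (Multiset ℕ) where
  verts := Set.univ
  wt := fun M => ↑(colWord M)
  E := fun j M M' => 1 ≤ j ∧ j < n ∧ fCol j M = some M'

/-- The matrix bicrystal graph `M_{m,n}`, with edges labelled `i^row` (`Sum.inl i`) and
`j^col` (`Sum.inr j`), and weight the pair (row-sum tuple, column-sum tuple). -/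
def MatGraph (m n : ℕ) :
    PCG (Matrix (Fin m) (Fin n) ℕ) (ℕ ⊕ ℕ) (Multiset ℕ × Multiset ℕ) where
  verts := Set.univ
  wt := fun M => (↑(rowWord M), ↑(colWord M))
  E := fun l M M' =>
    match l with
    | Sum.inl i => 1 ≤ i ∧ i < m ∧ fRow i M = some M'
    | Sum.inr j => 1 ≤ j ∧ j < n ∧ fCol j M = some M'

/-- The `(I|J)`-filtered matrix bicrystal graph `M^{I|J}_{m,n}`: delete the edges labelled
`i^row` with `i ∈ I` and `j^col` with `j ∈ J`. -/
def FilteredMatGraph (m n : ℕ) (I J : Set ℕ) :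
    PCG (Matrix (Fin m) (Fin n) ℕ) (ℕ ⊕ ℕ) (Multiset ℕ × Multiset ℕ) where
  verts := Set.univ
  wt := fun M => (↑(rowWord M), ↑(colWord M))
  E := fun l M M' =>
    match l with
    | Sum.inl i => i ∉ I ∧ 1 ≤ i ∧ i < m ∧ fRow i M = some M'
    | Sum.inr j => j ∉ J ∧ 1 ≤ j ∧ j < n ∧ fCol j M = some M'

/-- `filterRSK_{I|J}` at the level of reading words: apply the insertion tableau map to each
component of the filtrations of the row and column words, recording reading words. -/
def filterRSKw {m n r s : ℕ} (ι : Fin (r + 1) → ℕ) (κ : Fin (s + 1) → ℕ)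
    (M : Matrix (Fin m) (Fin n) ℕ) : (Fin r → List ℕ) × (Fin s → List ℕ) :=
  (fun k => readingWord (tabOf (filterWord ι (rowWord M) k)),
   fun k => readingWord (tabOf (filterWord κ (colWord M) k)))

/-- `filterRSK_{I|J}` at the level of tableaux. -/
def filterRSKt {m n r s : ℕ} (ι : Fin (r + 1) → ℕ) (κ : Fin (s + 1) → ℕ)
    (M : Matrix (Fin m) (Fin n) ℕ) :
    (Fin r → List (List ℕ)) × (Fin s → List (List ℕ)) :=
  (fun k => tabOf (filterWord ι (rowWord M) k),
   fun k => tabOf (filterWord κ (colWord M) k))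

/-- A matrix is a highest-weight vertex of `M^{I|J}_{m,n}`:
`e_i^row(M) = ∅` for all `i ∉ I` and `e_j^col(M) = ∅` for all `j ∉ J`. -/
def MatHighest {m n : ℕ} (I J : Set ℕ) (M : Matrix (Fin m) (Fin n) ℕ) : Prop :=
  (∀ i, 1 ≤ i → i < m → i ∉ I → eRow i M = none) ∧
  (∀ j, 1 ≤ j → j < n → j ∉ J → eCol j M = none)

/-- A set of matrices is `(I|J)`-bicrystal closed if it is closed under the bicrystal
operators `e_i^row, f_i^row` (`i ∉ I`) and `e_j^col, f_j^col` (`j ∉ J`). -/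
def BicrystalClosed {m n : ℕ} (I J : Set ℕ) (S : Set (Matrix (Fin m) (Fin n) ℕ)) : Prop :=
  ∀ M ∈ S,
    (∀ i, 1 ≤ i → i < m → i ∉ I →
      (∀ N, fRow i M = some N → N ∈ S) ∧ (∀ N, eRow i M = some N → N ∈ S)) ∧
    (∀ j, 1 ≤ j → j < n → j ∉ J →
      (∀ N, fCol j M = some N → N ∈ S) ∧ (∀ N, eCol j M = some N → N ∈ S))

/-- The induced pre-crystal subgraph of `M^{I|J}_{m,n}` on a set `S` of matrices. -/
def inducedMatGraph (m n : ℕ) (I J : Set ℕ) (S : Set (Matrix (Fin m) (Fin n) ℕ)) :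
    PCG (Matrix (Fin m) (Fin n) ℕ) (ℕ ⊕ ℕ) (Multiset ℕ × Multiset ℕ) where
  verts := S
  wt := fun M => (↑(rowWord M), ↑(colWord M))
  E := (FilteredMatGraph m n I J).E

/-- The disjoint union, over the highest-weight matrices `M₀ ∈ S` (hence with multiplicity
`c_{λ|μ}` for each filtered partition-tuple `(λ|μ)`), of copies of `B_{λ,m} □ B_{μ,n}` where
`(λ|μ)` is the shape of `filterRSK_{I|J}(M₀)`. -/
def sumCopiesGraph {m n : ℕ} {r s : ℕ} (ι : Fin (r + 1) → ℕ) (κ : Fin (s + 1) → ℕ)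
    (S : Set (Matrix (Fin m) (Fin n) ℕ)) :
    PCG (Matrix (Fin m) (Fin n) ℕ × ((Fin r → List ℕ) × (Fin s → List ℕ))) (ℕ ⊕ ℕ)
      ((Fin r → Multiset ℕ) × (Fin s → Multiset ℕ)) where
  verts := {Mp | Mp.1 ∈ S ∧ MatHighest (Set.range ι) (Set.range κ) Mp.1 ∧
    ∃ lam mu, IsFilteredShape ι lam ∧ IsFilteredShape κ mu ∧
      filterRSKt ι κ Mp.1 = (highestTabs ι lam, highestTabs κ mu) ∧
      Mp.2 ∈ (PCG.prod (BPiGraph ι lam) (BPiGraph κ mu)).verts}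
  wt := fun Mp => (PCG.prod (TabPiGraph ι) (TabPiGraph κ)).wt Mp.2
  E := fun l Mp Mq =>
    Mp.1 = Mq.1 ∧ (PCG.prod (TabPiGraph ι) (TabPiGraph κ)).E l Mp.2 Mq.2

/-! ## 1-based matrix entries and shape vectors -/

/-- The `(i,j)` entry of `M` in 1-based coordinates, with the convention that entries outside
the matrix are `0`. -/
def ent {m n : ℕ} (M : Matrix (Fin m) (Fin n) ℕ) (i j : ℕ) : ℕ :=
  if h : 1 ≤ i ∧ i ≤ m ∧ 1 ≤ j ∧ j ≤ n then M ⟨i - 1, by omega⟩ ⟨j - 1, by omega⟩ else 0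

/-- The partition `(lam (lo+1), lam (lo+2), …, lam (lo+size))` with trailing zero parts
removed: the shape of the block of a filtered partition-tuple written as an integer vector. -/
def blockShape (lam : ℕ → ℕ) (lo size : ℕ) : List ℕ :=
  ((List.range size).map fun t => lam (lo + t + 1)).filter fun x => decide (0 < x)

/-- The highest-weight tableau-tuple of the filtered partition-tuple written as an integer
vector `lam : ℕ → ℕ` (1-based). -/
def highestFromVec {r : ℕ} (ι : Fin (r + 1) → ℕ) (lam : ℕ → ℕ) : Fin r → List (List ℕ) :=
  fun k => highestTab (blockShape lam (ι k.castSucc) (ι k.succ - ι k.castSucc))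
    (ι k.castSucc + 1)

/-! ## Partial permutations and matrix Schubert combinatorics -/

/-- A partial permutation: at most one `1` in each row and column; encoded as an injective
partial function from rows to columns (`none` encodes `∞`). -/
def IsPartialPerm {m n : ℕ} (w : Fin m → Option (Fin n)) : Prop :=
  ∀ a a' b, w a = some b → w a' = some b → a = a'

/-- The cell `(i, j)` lies in the Rothe diagram `D(w)`: it is not weakly below nor weakly
right of a dot of the partial permutation matrix. -/
def InD {m n : ℕ} (w : Fin m → Option (Fin n)) (i : Fin m) (j : Fin n) : Prop :=
  (∀ b, w i = some b → (j : ℕ) < (b : ℕ)) ∧ (∀ a, a ≤ i → w a ≠ some j)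

/-- The row descent positions of `w` (1-based): rows `i` such that the rightmost box of
`D(w)` in row `i` is strictly right of the rightmost box in row `i + 1`. -/
def DescRow {m n : ℕ} (w : Fin m → Option (Fin n)) : Set ℕ :=
  {i | ∃ (h1 : 1 ≤ i) (h2 : i < m), ∃ j : Fin n,
    InD w ⟨i - 1, by omega⟩ j ∧ ∀ j' : Fin n, InD w ⟨i, h2⟩ j' → (j' : ℕ) < (j : ℕ)}

/-- The column descent positions of `w` (1-based). -/
def DescCol {m n : ℕ} (w : Fin m → Option (Fin n)) : Set ℕ :=
  {j | ∃ (h1 : 1 ≤ j) (h2 : j < n), ∃ i : Fin m,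
    InD w i ⟨j - 1, by omega⟩ ∧ ∀ i' : Fin m, InD w i' ⟨j, h2⟩ → (i' : ℕ) < (i : ℕ)}

/-- The rank function `r_w(i,j)`: the rank of the northwest `i × j` submatrix of the partial
permutation matrix, i.e. the number of dots in that submatrix. -/
noncomputable def rankFn {m n : ℕ} (w : Fin m → Option (Fin n)) (i j : ℕ) : ℕ :=
  Set.ncard {a : Fin m | (a : ℕ) < i ∧ ∃ b : Fin n, w a = some b ∧ (b : ℕ) < j}

/-- The matrix Schubert variety `X_w ⊆ Mat_{m,n}(ℂ)`: matrices whose northwest `i × j`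
submatrices have rank at most `r_w(i,j)`. -/
def XSchubert {m n : ℕ} (w : Fin m → Option (Fin n)) : Set (Matrix (Fin m) (Fin n) ℂ) :=
  {A | ∀ (i : ℕ) (hi : i ≤ m) (j : ℕ) (hj : j ≤ n),
    (A.submatrix (Fin.castLE hi) (Fin.castLE hj)).rank ≤ rankFn w i j}

/-- `g` is block-diagonal with diagonal blocks of sizes `i₁ - i₀, …, i_r - i_{r-1}`. -/
def IsBlockDiag {m : ℕ} {r : ℕ} (ι : Fin (r + 1) → ℕ) (g : Matrix (Fin m) (Fin m) ℂ) :
    Prop :=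
  ∀ a b : Fin m,
    (¬ ∃ k : Fin r, ι k.castSucc ≤ (a : ℕ) ∧ (a : ℕ) < ι k.succ ∧
        ι k.castSucc ≤ (b : ℕ) ∧ (b : ℕ) < ι k.succ) → g a b = 0

/-- `(p, q)` (0-based) is a cell of the essential set `E(w)`. -/
def EssCell {m n : ℕ} (w : Fin m → Option (Fin n)) (p : Fin m) (q : Fin n) : Prop :=
  InD w p q ∧ (∀ hq : (q : ℕ) + 1 < n, ¬ InD w p ⟨(q : ℕ) + 1, hq⟩) ∧
    (∀ hp : (p : ℕ) + 1 < m, ¬ InD w ⟨(p : ℕ) + 1, hp⟩ q)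

/-- `N` carries an antidiagonal of some Fulton generator of the Schubert determinantal ideal
of `w`: there are an essential cell `(p,q)`, `t = r_w(p,q) + 1` rows `r₁ < ⋯ < r_t ≤ p` and
columns `c₁ < ⋯ < c_t ≤ q` with `N_{r_s, c_{t+1-s}} ≥ 1` for all `s`. -/
def CarriesAntidiag {m n : ℕ} (w : Fin m → Option (Fin n))
    (N : Matrix (Fin m) (Fin n) ℕ) : Prop :=
  ∃ (p : Fin m) (q : Fin n), EssCell w p q ∧
    ∃ (rr : Fin (rankFn w ((p : ℕ) + 1) ((q : ℕ) + 1) + 1) → Fin m)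
      (cc : Fin (rankFn w ((p : ℕ) + 1) ((q : ℕ) + 1) + 1) → Fin n),
      StrictMono rr ∧ StrictMono cc ∧ (∀ t, rr t ≤ p) ∧ (∀ t, cc t ≤ q) ∧
      ∀ t, 1 ≤ N (rr t) (cc t.rev)

/-! ### Aux: counter analysis of the bracket scan -/

def stepFn (i c x : ℕ) : ℕ := if x = i + 1 then c + 1 else if x = i then c - 1 else c

def scanF (i : ℕ) (st : List ℕ × List ℕ) (p : ℕ × ℕ) : List ℕ × List ℕ :=
  if p.2 = i + 1 then (st.1, p.1 :: st.2)
  else if p.2 = i then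
    match st.2 with
    | [] => (p.1 :: st.1, [])
    | _ :: rest => (st.1, rest)
  else st

lemma bracketScan_eq (i : ℕ) (w : List ℕ) :
    bracketScan i w = (w.zipIdx.map Prod.swap).foldl (scanF i) ([], []) := rfl

lemma scanF_len (i : ℕ) : ∀ (l : List (ℕ × ℕ)) (st : List ℕ × List ℕ),
    ((l.foldl (scanF i) st).2).length = (l.map Prod.snd).foldl (stepFn i) st.2.length
  | [], st => rfl
  | p :: l, st => by
    rw [List.foldl_cons, List.map_cons, List.foldl_cons, scanF_len i l]
    congr 1
    unfold scanF stepFn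
    by_cases h1 : p.2 = i + 1
    · simp [h1]
    · by_cases h2 : p.2 = i
      · cases hst : st.2 with
        | nil => simp [h1, h2, hst]
        | cons a t => simp [h1, h2, hst]
      · simp [h1, h2]

lemma scanF_sub (i : ℕ) (st : List ℕ × List ℕ) (p : ℕ × ℕ) :
    ∀ x ∈ (scanF i st p).2, x = p.1 ∨ x ∈ st.2 := by
  intro x hx
  unfold scanF at hx
  by_cases h1 : p.2 = i + 1
  · simp [h1] at hx
    tauto
  · by_cases h2 : p.2 = i
    · cases hst : st.2 with
      | nil => simp [h1, h2, hst] at hx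
      | cons a t =>
        simp [h1, h2, hst] at hx
        right; exact List.mem_cons_of_mem _ hx
    · simp [h1, h2] at hx
      tauto

lemma scan_mem_lt (i : ℕ) (w : List ℕ) : ∀ x ∈ (bracketScan i w).2, x < w.length := by
  have key : ∀ (l : List (ℕ × ℕ)) (st : List ℕ × List ℕ) (x : ℕ),
      x ∈ (l.foldl (scanF i) st).2 → x ∈ st.2 ∨ x ∈ l.map Prod.fst := by
    intro l
    induction l with
    | nil => intro st x h; exact Or.inl h
    | cons p l ih =>
      intro st x h
      rw [List.foldl_cons] at h
      rcases ih _ x h with h' | h'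
      · rcases scanF_sub i st p x h' with h'' | h''
        · right; rw [h'']; simp
        · left; exact h''
      · right; exact List.mem_cons_of_mem _ h'
  intro x hx
  rw [bracketScan_eq] at hx
  rcases key _ _ x hx with h | h
  · simp at h
  · rw [List.map_map, show Prod.fst ∘ Prod.swap = (Prod.snd : ℕ × ℕ → ℕ) from rfl,
      List.zipIdx_map_snd] at h; simpa using h

lemma ePos_none_iff (i : ℕ) (w : List ℕ) :
    ePos i w = none ↔ w.foldl (stepFn i) 0 = 0 := by
  rw [ePos, List.getLast?_eq_none_iff, ← List.length_eq_zero_iff, bracketScan_eq, scanF_len]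
  simp [List.map_map, Function.comp_def, List.zipIdx_map_fst]

/-! ### Fold machinery -/

lemma foldl_flatMap {α β γ : Type*} (f : α → List β) (g : γ → β → γ) :
    ∀ (l : List α) (c : γ), (l.flatMap f).foldl g c = l.foldl (fun c a => (f a).foldl g c) c
  | [], _ => rfl
  | a :: l, c => by
    rw [List.flatMap_cons, List.foldl_append, List.foldl_cons, foldl_flatMap f g l]

lemma foldl_stepFn_replicate (i x : ℕ) : ∀ (k c : ℕ), (List.replicate k x).foldl (stepFn i) c
    = if x = i + 1 then c + k else if x = i then c - k else c
  | 0, c => by simp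
  | k+1, c => by
    rw [List.replicate_succ, List.foldl_cons, foldl_stepFn_replicate i x k]
    unfold stepFn
    split_ifs <;> omega

lemma foldl_congr_id {g : ℕ → ℕ → ℕ} : ∀ (l : List ℕ), (∀ a ∈ l, ∀ c, g c a = c) →
    ∀ c, l.foldl g c = c
  | [], _, c => rfl
  | a :: l, h, c => by
    rw [List.foldl_cons, h a (by simp)]
    exact foldl_congr_id l (fun b hb => h b (by simp [hb])) c

def wordOf (P : ℕ → ℕ → ℕ) (N K : ℕ) : List ℕ :=
  (List.range N).flatMap fun j => (List.range K).flatMap fun a => List.replicate (P a j) (a + 1)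

lemma col_foldl (P : ℕ → ℕ → ℕ) (K r j : ℕ) (hr : r + 1 < K) (c : ℕ) :
    ((List.range K).flatMap fun a => List.replicate (P a j) (a + 1)).foldl (stepFn (r+1)) c
      = c - P r j + P (r+1) j := by
  rw [foldl_flatMap]
  have effid : ∀ a : ℕ, a ≠ r → a ≠ r + 1 → ∀ c : ℕ,
      (List.replicate (P a j) (a + 1)).foldl (stepFn (r+1)) c = c := by
    intro a ha1 ha2 c
    rw [foldl_stepFn_replicate, if_neg (by omega), if_neg (by omega)]
  have h1 : List.range K = ((List.range r ++ [r]) ++ [r+1])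
      ++ (List.range (K - (r+2))).map (fun t => (r+2) + t) := by
    rw [← List.range_succ, ← List.range_succ, ← List.range_add]
    congr 1
    omega
  rw [h1, List.foldl_append, List.foldl_append, List.foldl_append]
  rw [foldl_congr_id (List.range r)
    (fun a ha c => effid a (by simp at ha; omega) (by simp at ha; omega) c)]
  simp only [List.foldl_cons, List.foldl_nil]
  have e1 : (List.replicate (P r j) (r + 1)).foldl (stepFn (r+1)) c = c - P r j := by
    rw [foldl_stepFn_replicate, if_neg (by omega), if_pos rfl]
  have e2 : ∀ c : ℕ,
      (List.replicate (P (r+1) j) (r + 1 + 1)).foldl (stepFn (r+1)) c = c + P (r+1) j := by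
    intro c; rw [foldl_stepFn_replicate, if_pos rfl]
  rw [e1, e2, List.foldl_map]
  exact foldl_congr_id _ (fun a ha c => effid _ (by simp at ha; omega) (by simp at ha; omega) c) _

def gfold (l : List (ℕ × ℕ)) (c : ℕ) : ℕ := l.foldl (fun c p => c - p.1 + p.2) c

lemma gfold_def (l : List (ℕ × ℕ)) (c : ℕ) :
    l.foldl (fun c p => c - p.1 + p.2) c = gfold l c := rfl

lemma wordOf_foldl (P : ℕ → ℕ → ℕ) (N K r : ℕ) (hr : r + 1 < K) (c : ℕ) :
    (wordOf P N K).foldl (stepFn (r+1)) c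
      = gfold ((List.range N).map fun j => (P r j, P (r+1) j)) c := by
  rw [wordOf, foldl_flatMap, ← gfold_def, List.foldl_map]
  have : (fun (c : ℕ) (j : ℕ) =>
      ((List.range K).flatMap fun a => List.replicate (P a j) (a + 1)).foldl (stepFn (r+1)) c)
      = fun c j => c - (P r j, P (r+1) j).1 + (P r j, P (r+1) j).2 := by
    funext c j
    exact col_foldl P K r j hr c
  rw [this]

lemma gfold_cons (p : ℕ × ℕ) (l : List (ℕ × ℕ)) (c : ℕ) :
    gfold (p :: l) c = gfold l (c - p.1 + p.2) := rfl

lemma gfold_mono : ∀ (l : List (ℕ × ℕ)) {c c' : ℕ}, c ≤ c' → gfold l c ≤ gfold l c'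
  | [], _, _, h => h
  | p :: l, c, c', h => by
    rw [gfold_cons, gfold_cons]
    exact gfold_mono l (by omega)

lemma gfold_lower : ∀ (l : List (ℕ × ℕ)) (c : ℕ),
    c + (l.map Prod.snd).sum - (l.map Prod.fst).sum ≤ gfold l c
  | [], c => by simp [gfold]
  | p :: l, c => by
    have := gfold_lower l (c - p.1 + p.2)
    rw [gfold_cons]
    simp only [List.map_cons, List.sum_cons]
    omega

lemma gfold_zero_of : ∀ (l : List (ℕ × ℕ)),
    (∀ k, ((l.drop k).map Prod.snd).sum ≤ ((l.drop (k+1)).map Prod.fst).sum) →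
    ∀ c, c + (l.map Prod.snd).sum ≤ (l.map Prod.fst).sum → gfold l c = 0
  | [], _, c, h => by
    simp only [List.map_nil, List.sum_nil] at h
    simp [gfold]
    omega
  | p :: l, hc, c, h => by
    have h0 := hc 0
    simp only [List.drop_zero, List.drop_succ_cons, List.map_cons, List.sum_cons] at h0 h
    rw [gfold_cons]
    refine gfold_zero_of l (fun k => by simpa using hc (k+1)) _ ?_
    omega

lemma gfold_zero_iff (l : List (ℕ × ℕ)) :
    gfold l 0 = 0 ↔
      ∀ k, ((l.drop k).map Prod.snd).sum ≤ ((l.drop (k+1)).map Prod.fst).sum := by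
  constructor
  · intro h0 k
    by_cases hk : k < l.length
    · have hdrop : l.drop k = l[k] :: l.drop (k+1) := List.drop_eq_getElem_cons hk
      have h1 : gfold l 0 = gfold (l.drop k) (gfold (l.take k) 0) := by
        rw [← gfold_def, ← gfold_def, ← gfold_def, ← List.foldl_append, List.take_append_drop]
      have h2 : gfold (l.drop k) 0 ≤ gfold l 0 := by
        rw [h1]; exact gfold_mono _ (Nat.zero_le _)
      have h3 : gfold (l.drop k) 0 = gfold (l.drop (k+1)) (0 - l[k].1 + l[k].2) := by
        rw [hdrop, gfold_cons]
      have h4 := gfold_lower (l.drop (k+1)) (0 - l[k].1 + l[k].2)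
      have h5 : ((l.drop k).map Prod.snd).sum
          = l[k].2 + ((l.drop (k+1)).map Prod.snd).sum := by
        rw [hdrop, List.map_cons, List.sum_cons]
      omega
    · rw [List.drop_eq_nil_of_le (by omega)]
      simp
  · intro hc
    refine gfold_zero_of l hc 0 ?_
    rcases l with _ | ⟨p, t⟩
    · simp
    · have h0 := hc 0
      simp only [List.drop_zero, List.drop_succ_cons, List.map_cons, List.sum_cons] at h0 ⊢
      omega

/-! ### Tail sums -/

lemma drop_range' (N : ℕ) : ∀ k, (List.range N).drop k = List.range' k (N - k)
  | 0 => by rw [List.drop_zero, Nat.sub_zero, List.range_eq_range']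
  | k+1 => by
    rw [← List.drop_drop, drop_range' N k]
    rcases Nat.eq_zero_or_eq_succ_pred (N - k) with h | h
    · rw [h, show N - (k+1) = 0 from by omega]
      simp
    · rw [h, List.range'_succ, List.drop_succ_cons, List.drop_zero]
      congr 1

lemma sum_map_range' (f : ℕ → ℕ) : ∀ (k a : ℕ),
    ((List.range' a k).map f).sum = ∑ x ∈ Finset.Ico a (a + k), f x
  | 0, a => by simp
  | k+1, a => by
    rw [List.range'_succ, List.map_cons, List.sum_cons, sum_map_range' f k (a+1)]
    rw [Finset.sum_Ico_eq_sum_range, Finset.sum_Ico_eq_sum_range]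
    rw [show a + 1 + k - (a+1) = k from by omega, show a + (k+1) - a = k+1 from by omega]
    rw [Finset.sum_range_succ']
    have h1 : ∑ x ∈ Finset.range k, f (a + 1 + x) = ∑ x ∈ Finset.range k, f (a + (x+1)) :=
      Finset.sum_congr rfl (fun x _ => by rw [show a+1+x = a+(x+1) from by omega])
    rw [h1, Nat.add_zero]
    exact Nat.add_comm _ _

def TS (f : ℕ → ℕ) (N j : ℕ) : ℕ := ∑ x ∈ Finset.Ico j N, f x

lemma TS_sum_drop (f : ℕ → ℕ) (N k : ℕ) :
    (((List.range N).drop k).map f).sum = TS f N k := by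
  rw [drop_range', sum_map_range']
  unfold TS
  by_cases h : k ≤ N
  · rw [show k + (N - k) = N from by omega]
  · rw [show k + (N - k) = k from by omega, Finset.Ico_self, Finset.Ico_eq_empty (by omega)]

lemma wordOf_zero_iff (P : ℕ → ℕ → ℕ) (N K r : ℕ) (hr : r + 1 < K) :
    (wordOf P N K).foldl (stepFn (r+1)) 0 = 0 ↔
      ∀ k, TS (fun j => P (r+1) j) N k ≤ TS (fun j => P r j) N (k+1) := by
  rw [wordOf_foldl P N K r hr, gfold_zero_iff]
  have hs2 : ∀ k : ℕ,
      ((((List.range N).map fun j => (P r j, P (r+1) j)).drop k).map Prod.snd).sum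
        = TS (fun j => P (r+1) j) N k := by
    intro k
    rw [← List.map_drop, List.map_map]
    exact TS_sum_drop (fun j => P (r+1) j) N k
  have hf2 : ∀ k : ℕ,
      ((((List.range N).map fun j => (P r j, P (r+1) j)).drop k).map Prod.fst).sum
        = TS (fun j => P r j) N k := by
    intro k
    rw [← List.map_drop, List.map_map]
    exact TS_sum_drop (fun j => P r j) N k
  constructor
  · intro h k
    have := h k
    rw [hs2 k, hf2 (k+1)] at this
    exact this
  · intro h k
    rw [hs2 k, hf2 (k+1)]
    exact h k

/-! ### matrix lemmas -/

variable {m n : ℕ}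

def entE (M : Matrix (Fin m) (Fin n) ℕ) (i j : ℕ) : ℕ :=
  if h : i < m ∧ j < n then M ⟨i, h.1⟩ ⟨j, h.2⟩ else 0

lemma entE_eq (M : Matrix (Fin m) (Fin n) ℕ) (i : Fin m) (j : Fin n) :
    entE M i j = M i j := by
  unfold entE
  rw [dif_pos ⟨i.isLt, j.isLt⟩]

lemma entE_row (M : Matrix (Fin m) (Fin n) ℕ) {i : ℕ} (j : ℕ) (h : m ≤ i) :
    entE M i j = 0 := by
  unfold entE
  rw [dif_neg (by omega)]

lemma entE_col (M : Matrix (Fin m) (Fin n) ℕ) (i : ℕ) {j : ℕ} (h : n ≤ j) :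
    entE M i j = 0 := by
  unfold entE
  rw [dif_neg (by omega)]

lemma rowWord_eq (M : Matrix (Fin m) (Fin n) ℕ) : rowWord M = wordOf (entE M) n m := by
  have hfr : ∀ k, (List.finRange k).map (fun i : Fin k => (i : ℕ)) = List.range k :=
    fun k => List.ext_getElem (by simp) (by simp)
  rw [rowWord, wordOf, ← hfr n, List.flatMap_map]
  congr 1
  funext j
  rw [← hfr m, List.flatMap_map]
  congr 1
  funext i
  rw [entE_eq]

lemma colWord_eq (M : Matrix (Fin m) (Fin n) ℕ) :
    colWord M = wordOf (fun a b => entE M b a) m n := by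
  have hfr : ∀ k, (List.finRange k).map (fun i : Fin k => (i : ℕ)) = List.range k :=
    fun k => List.ext_getElem (by simp) (by simp)
  rw [colWord, wordOf, ← hfr m, List.flatMap_map]
  congr 1
  funext i
  rw [← hfr n, List.flatMap_map]
  congr 1
  funext j
  rw [entE_eq]

lemma rowCells_length (M : Matrix (Fin m) (Fin n) ℕ) :
    (rowCells M).length = (rowWord M).length := by
  rw [rowCells, rowWord, List.length_flatMap, List.length_flatMap]
  apply congrArg List.sum
  apply List.map_congr_left
  intro j _
  simp [List.length_flatMap, Function.comp_def]

lemma colCells_length (M : Matrix (Fin m) (Fin n) ℕ) :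
    (colCells M).length = (colWord M).length := by
  rw [colCells, colWord, List.length_flatMap, List.length_flatMap]
  apply congrArg List.sum
  apply List.map_congr_left
  intro i _
  simp [List.length_flatMap, Function.comp_def]

lemma eRow_none_iff (M : Matrix (Fin m) (Fin n) ℕ) (r : ℕ) (hr : r + 1 < m) :
    eRow (r+1) M = none ↔
      ∀ k, TS (fun j => entE M (r+1) j) n k ≤ TS (fun j => entE M r j) n (k+1) := by
  rw [← wordOf_zero_iff (entE M) n m r hr, ← rowWord_eq, ← ePos_none_iff]
  constructor
  · intro h
    by_contra hne
    rcases Option.ne_none_iff_exists'.mp hne with ⟨p, hp⟩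
    have hmem : p ∈ (bracketScan (r+1) (rowWord M)).2 := List.mem_of_mem_getLast? hp
    have hlt : p < (rowCells M).length := by
      rw [rowCells_length]
      exact scan_mem_lt _ _ p hmem
    rw [eRow, hp] at h
    simp [List.getElem?_eq_getElem hlt] at h
  · intro h
    rw [eRow, h]
    rfl

lemma eCol_none_iff (M : Matrix (Fin m) (Fin n) ℕ) (c : ℕ) (hc : c + 1 < n) :
    eCol (c+1) M = none ↔
      ∀ k, TS (fun i => entE M i (c+1)) m k ≤ TS (fun i => entE M i c) m (k+1) := by
  rw [← wordOf_zero_iff (fun a b => entE M b a) m n c hc, ← colWord_eq, ← ePos_none_iff]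
  constructor
  · intro h
    by_contra hne
    rcases Option.ne_none_iff_exists'.mp hne with ⟨p, hp⟩
    have hmem : p ∈ (bracketScan (c+1) (colWord M)).2 := List.mem_of_mem_getLast? hp
    have hlt : p < (colCells M).length := by
      rw [colCells_length]
      exact scan_mem_lt _ _ p hmem
    rw [eCol, hp] at h
    simp [List.getElem?_eq_getElem hlt] at h
  · intro h
    rw [eCol, h]
    rfl

/-! ### Tail-sum combinatorics -/

def Rts (M : Matrix (Fin m) (Fin n) ℕ) (i j : ℕ) : ℕ := ∑ x ∈ Finset.Ico j n, entE M i x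

def Cts (M : Matrix (Fin m) (Fin n) ℕ) (j i : ℕ) : ℕ := ∑ x ∈ Finset.Ico i m, entE M x j

def Qts (M : Matrix (Fin m) (Fin n) ℕ) (i j : ℕ) : ℕ := ∑ x ∈ Finset.Ico i m, Rts M x j

variable (M : Matrix (Fin m) (Fin n) ℕ)

lemma Rts_TS (i j : ℕ) : Rts M i j = TS (fun x => entE M i x) n j := rfl

lemma Cts_TS (j i : ℕ) : Cts M j i = TS (fun x => entE M x j) m i := rfl

lemma Rts_zero_row {i : ℕ} (j : ℕ) (h : m ≤ i) : Rts M i j = 0 :=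
  Finset.sum_eq_zero fun x _ => entE_row M x h

lemma Rts_zero_col (i : ℕ) {j : ℕ} (h : n ≤ j) : Rts M i j = 0 := by
  unfold Rts
  rw [Finset.Ico_eq_empty (by omega), Finset.sum_empty]

lemma Cts_zero_col {j : ℕ} (i : ℕ) (h : n ≤ j) : Cts M j i = 0 :=
  Finset.sum_eq_zero fun x _ => entE_col M x h

lemma Cts_zero_row (j : ℕ) {i : ℕ} (h : m ≤ i) : Cts M j i = 0 := by
  unfold Cts
  rw [Finset.Ico_eq_empty (by omega), Finset.sum_empty]

lemma Rts_rec (i j : ℕ) : Rts M i j = entE M i j + Rts M i (j+1) := by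
  by_cases h : j < n
  · exact Finset.sum_eq_sum_Ico_succ_bot h _
  · rw [Rts_zero_col M i (by omega), Rts_zero_col M i (by omega), entE_col M i (by omega)]
    all_goals omega

lemma Cts_rec (j i : ℕ) : Cts M j i = entE M i j + Cts M j (i+1) := by
  by_cases h : i < m
  · exact Finset.sum_eq_sum_Ico_succ_bot h _
  · rw [Cts_zero_row M j (by omega), Cts_zero_row M j (by omega), entE_row M j (by omega)]
    all_goals omega

lemma Qts_zero {i : ℕ} (j : ℕ) (h : m ≤ i) : Qts M i j = 0 := by
  unfold Qts
  rw [Finset.Ico_eq_empty (by omega), Finset.sum_empty]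

lemma Qts_rec_row (i j : ℕ) : Qts M i j = Rts M i j + Qts M (i+1) j := by
  by_cases h : i < m
  · exact Finset.sum_eq_sum_Ico_succ_bot h _
  · rw [Qts_zero M j (by omega), Qts_zero M j (by omega), Rts_zero_row M j (by omega)]
    all_goals omega

lemma Qts_eq_col (i j : ℕ) : Qts M i j = ∑ x ∈ Finset.Ico j n, Cts M x i := by
  unfold Qts Rts Cts
  exact Finset.sum_comm

lemma Qts_rec_col (i j : ℕ) : Qts M i j = Cts M j i + Qts M i (j+1) := by
  rw [Qts_eq_col, Qts_eq_col]
  by_cases h : j < n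
  · exact Finset.sum_eq_sum_Ico_succ_bot h _
  · rw [Finset.Ico_eq_empty (show ¬ (j < n) from by omega), Finset.sum_empty,
      Finset.Ico_eq_empty (show ¬ (j + 1 < n) from by omega), Finset.sum_empty,
      Cts_zero_col M i (by omega)]
    all_goals omega

section conds

variable (hR : ∀ r k, r + 1 < m → Rts M (r+1) k ≤ Rts M r (k+1))
variable (hC : ∀ c k, c + 1 < n → Cts M (c+1) k ≤ Cts M c (k+1))

include hR in
lemma hR' : ∀ r k, Rts M (r+1) k ≤ Rts M r (k+1) := by
  intro r k
  by_cases h : r + 1 < m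
  · exact hR r k h
  · rw [Rts_zero_row M k (by omega)]
    exact Nat.zero_le _

include hC in
lemma hC' : ∀ c k, Cts M (c+1) k ≤ Cts M c (k+1) := by
  intro c k
  by_cases h : c + 1 < n
  · exact hC c k h
  · rw [Cts_zero_col M k (by omega)]
    exact Nat.zero_le _

include hR in
lemma Qrow : ∀ (d i j : ℕ), m - i ≤ d → Qts M (i+1) j ≤ Qts M i (j+1) := by
  intro d
  induction d with
  | zero =>
    intro i j h
    rw [Qts_zero M j (by omega)]
    exact Nat.zero_le _
  | succ d ih =>
    intro i j h
    by_cases hi : m ≤ i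
    · rw [Qts_zero M j (by omega)]
      exact Nat.zero_le _
    · rw [Qts_rec_row M (i+1) j, Qts_rec_row M i (j+1)]
      exact Nat.add_le_add (hR' M hR i j) (ih (i+1) j (by omega))

include hC in
lemma Qcol : ∀ (d i j : ℕ), n - j ≤ d → Qts M i (j+1) ≤ Qts M (i+1) j := by
  intro d
  induction d with
  | zero =>
    intro i j h
    have : ∀ x, Rts M x (j+1) = 0 := fun x => Rts_zero_col M x (by omega)
    unfold Qts
    rw [Finset.sum_eq_zero (fun x _ => this x)]
    exact Nat.zero_le _
  | succ d ih =>
    intro i j h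
    by_cases hj : n ≤ j
    · unfold Qts
      rw [Finset.sum_eq_zero (fun x _ => Rts_zero_col M x (by omega))]
      exact Nat.zero_le _
    · rw [Qts_rec_col M i (j+1), Qts_rec_col M (i+1) j]
      exact Nat.add_le_add (hC' M hC j i) (ih i (j+1) (by omega))

include hR hC in
lemma Qeq : ∀ i j, Qts M (i+1) j = Qts M i (j+1) := fun i j =>
  le_antisymm (Qrow M hR (m - i) i j le_rfl) (Qcol M hC (n - j) i j le_rfl)

include hR hC in
lemma Req_of_conds : ∀ r j, Rts M (r+1) j = Rts M r (j+1) := by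
  intro r j
  have h1 := Qts_rec_row M (r+1) j
  have h2 := Qts_rec_row M r (j+1)
  have h3 := Qeq M hR hC r j
  have h4 := Qeq M hR hC (r+1) j
  omega

include hR hC in
lemma PC_of_conds : ∀ i j, entE M (i+1) j = entE M i (j+1) := by
  intro i j
  have h1 := Rts_rec M (i+1) j
  have h2 := Rts_rec M i (j+1)
  have h3 := Req_of_conds M hR hC i j
  have h4 := Req_of_conds M hR hC i (j+1)
  omega

end conds

section pc

variable (hPC : ∀ i j, entE M (i+1) j = entE M i (j+1))

include hPC in
lemma Req_of_PC : ∀ (d r j : ℕ), n - j ≤ d → Rts M (r+1) j = Rts M r (j+1) := by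
  intro d
  induction d with
  | zero =>
    intro r j h
    rw [Rts_zero_col M _ (by omega), Rts_zero_col M _ (by omega)]
  | succ d ih =>
    intro r j h
    by_cases hj : n ≤ j
    · rw [Rts_zero_col M _ (by omega), Rts_zero_col M _ (by omega)]
    · rw [Rts_rec M (r+1) j, Rts_rec M r (j+1), hPC r j, ih r (j+1) (by omega)]

include hPC in
lemma Ceq_of_PC : ∀ (d c i : ℕ), m - i ≤ d → Cts M (c+1) i = Cts M c (i+1) := by
  intro d
  induction d with
  | zero =>
    intro c i h
    rw [Cts_zero_row M _ (by omega), Cts_zero_row M _ (by omega)]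
  | succ d ih =>
    intro c i h
    by_cases hi : m ≤ i
    · rw [Cts_zero_row M _ (by omega), Cts_zero_row M _ (by omega)]
    · rw [Cts_rec M (c+1) i, Cts_rec M c (i+1), hPC i c, ih c (i+1) (by omega)]

include hPC in
lemma entE_diag_row : ∀ i j, entE M i j = entE M 0 (i + j) := by
  intro i
  induction i with
  | zero => simp
  | succ i ih =>
    intro j
    rw [hPC i j, ih (j+1)]
    congr 1
    omega

include hPC in
lemma entE_diag_col : ∀ i j, entE M i j = entE M (i + j) 0 := by
  intro i j
  induction j generalizing i with
  | zero => simp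
  | succ j ih =>
    rw [← hPC i j, ih (i+1)]
    congr 1
    omega

include hPC in
lemma entE_min_zero : ∀ t, min m n ≤ t → entE M 0 t = 0 := by
  intro t ht
  by_cases h : n ≤ t
  · exact entE_col M 0 h
  · have h0 : entE M 0 t = entE M t 0 := by
      rw [entE_diag_col M hPC 0 t, Nat.zero_add]
    rw [h0]
    exact entE_row M 0 (by omega)

end pc

section pc2
variable (hPC : ∀ i j, entE M (i+1) j = entE M i (j+1))

include hPC in
lemma Rts_diag : ∀ i j, Rts M i j = Rts M 0 (i + j) := by
  intro i
  induction i with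
  | zero => intro j; rw [Nat.zero_add]
  | succ i ih =>
    intro j
    rw [Req_of_PC M hPC (n - j) i j le_rfl, ih (j+1)]
    congr 1
    omega

include hPC in
lemma Cts_diag : ∀ j i, Cts M j i = Cts M 0 (j + i) := by
  intro j
  induction j with
  | zero => intro i; rw [Nat.zero_add]
  | succ j ih =>
    intro i
    rw [Ceq_of_PC M hPC (m - i) j i le_rfl, ih (i+1)]
    congr 1
    omega

end pc2

lemma PC_iff_structure :
    (∀ i j, entE M (i+1) j = entE M i (j+1)) ↔
    (∃ a : ℕ → ℕ, ∀ (i : Fin m) (j : Fin n),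
      M i j = if (i : ℕ) + (j : ℕ) + 1 ≤ min m n then a ((i : ℕ) + (j : ℕ) + 1) else 0) := by
  constructor
  · intro hPC
    refine ⟨fun t => entE M 0 (t - 1), fun i j => ?_⟩
    rw [← entE_eq M i j]
    by_cases h : (i : ℕ) + (j : ℕ) + 1 ≤ min m n
    · rw [if_pos h, entE_diag_row M hPC i j]
      congr 1
    · rw [if_neg h, entE_diag_row M hPC i j]
      exact entE_min_zero M hPC _ (by omega)
  · rintro ⟨a, ha⟩ i j
    have hE : ∀ i j : ℕ, entE M i j
        = if i + j + 1 ≤ min m n ∧ i < m ∧ j < n then a (i + j + 1) else 0 := by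
      intro i j
      unfold entE
      by_cases h : i < m ∧ j < n
      · rw [dif_pos h, ha ⟨i, h.1⟩ ⟨j, h.2⟩]
        by_cases h2 : i + j + 1 ≤ min m n
        · rw [if_pos h2, if_pos ⟨h2, h⟩]
        · rw [if_neg h2, if_neg (by tauto)]
      · rw [dif_neg h, if_neg (by tauto)]
    rw [hE, hE]
    by_cases h : (i + 1) + j + 1 ≤ min m n
    · rw [if_pos (by omega), if_pos (by omega)]
      congr 1
      omega
    · rw [if_neg (by omega), if_neg (by omega)]

lemma rowsum_eq_Rts (k : ℕ) :
    (if h : k < m then ∑ j, M ⟨k, h⟩ j else 0) = Rts M k 0 := by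
  by_cases h : k < m
  · rw [dif_pos h]
    unfold Rts
    rw [← Finset.range_eq_Ico, ← Fin.sum_univ_eq_sum_range (fun x => entE M k x) n]
    refine Finset.sum_congr rfl (fun j _ => ?_)
    unfold entE
    rw [dif_pos ⟨h, j.isLt⟩]
  · rw [dif_neg h]
    exact (Rts_zero_row M 0 (by omega)).symm

lemma colsum_eq_Cts (k : ℕ) :
    (if h : k < n then ∑ i, M i ⟨k, h⟩ else 0) = Cts M k 0 := by
  by_cases h : k < n
  · rw [dif_pos h]
    unfold Cts
    rw [← Finset.range_eq_Ico, ← Fin.sum_univ_eq_sum_range (fun x => entE M x k) m]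
    refine Finset.sum_congr rfl (fun i _ => ?_)
    unfold entE
    rw [dif_pos ⟨i.isLt, h⟩]
  · rw [dif_neg h]
    exact (Cts_zero_col M 0 (by omega)).symm

lemma main_iff :
    ((∀ i, 1 ≤ i → i < m → eRow i M = none) ∧
      (∀ j, 1 ≤ j → j < n → eCol j M = none)) ↔
      (∀ i j, entE M (i+1) j = entE M i (j+1)) := by
  constructor
  · rintro ⟨hrow, hcol⟩
    have hR : ∀ r k, r + 1 < m → Rts M (r+1) k ≤ Rts M r (k+1) := by
      intro r k h
      exact (eRow_none_iff M r h).mp (hrow (r+1) (by omega) h) k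
    have hC : ∀ c k, c + 1 < n → Cts M (c+1) k ≤ Cts M c (k+1) := by
      intro c k h
      exact (eCol_none_iff M c h).mp (hcol (c+1) (by omega) h) k
    exact PC_of_conds M hR hC
  · intro hPC
    constructor
    · intro i h1 h2
      obtain ⟨r, rfl⟩ : ∃ r, i = r + 1 := ⟨i - 1, by omega⟩
      rw [eRow_none_iff M r h2]
      intro k
      exact le_of_eq (Req_of_PC M hPC (n - k) r k le_rfl)
    · intro j h1 h2
      obtain ⟨c, rfl⟩ : ∃ c, j = c + 1 := ⟨j - 1, by omega⟩
      rw [eCol_none_iff M c h2]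
      intro k
      exact le_of_eq (Ceq_of_PC M hPC (m - k) c k le_rfl)


/-- A matrix `M ∈ Mat_{m,n}(ℤ≥0)` is a highest-weight vertex of the full
matrix bicrystal iff its entries are constant along initial antidiagonals and vanish beyond
the `min(m,n)`-th antidiagonal; in particular for highest-weight `M` the row-sum sequence
equals the column-sum sequence and is a partition with at most `min(m,n)` parts. -/
theorem highest_weight_matrix_characterization (m n : ℕ)
    (M : Matrix (Fin m) (Fin n) ℕ) :
    (((∀ i, 1 ≤ i → i < m → eRow i M = none) ∧
      (∀ j, 1 ≤ j → j < n → eCol j M = none)) ↔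
      ∃ a : ℕ → ℕ, ∀ (i : Fin m) (j : Fin n),
        M i j = if (i : ℕ) + (j : ℕ) + 1 ≤ min m n then a ((i : ℕ) + (j : ℕ) + 1) else 0) ∧
    (((∀ i, 1 ≤ i → i < m → eRow i M = none) ∧
      (∀ j, 1 ≤ j → j < n → eCol j M = none)) →
      ((∀ k : ℕ, (if h : k < m then ∑ j, M ⟨k, h⟩ j else 0) =
          (if h : k < n then ∑ i, M i ⟨k, h⟩ else 0)) ∧
       (∀ k : ℕ, (if h : k + 1 < m then ∑ j, M ⟨k + 1, h⟩ j else 0) ≤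
          (if h : k < m then ∑ j, M ⟨k, h⟩ j else 0)) ∧
       (∀ k : ℕ, min m n ≤ k → (if h : k < m then ∑ j, M ⟨k, h⟩ j else 0) = 0))) := by
  constructor
  · exact (main_iff M).trans (PC_iff_structure M)
  · intro hcond
    have hPC := (main_iff M).mp hcond
    have cross : ∀ k, Rts M 0 k = Cts M 0 k := by
      intro k
      have e0 : ∀ x : ℕ, entE M x 0 = entE M 0 x := fun x => by
        rw [entE_diag_row M hPC x 0, Nat.add_zero]
      have e1 : Rts M 0 k = ∑ x ∈ Finset.Ico k (m + n), entE M 0 x :=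
        Finset.sum_subset (Finset.Ico_subset_Ico le_rfl (by omega))
          (fun x hx hnx => entE_col M 0 (by simp [Finset.mem_Ico] at hx hnx; omega))
      have e2 : Cts M 0 k = ∑ x ∈ Finset.Ico k (m + n), entE M 0 x := by
        unfold Cts
        rw [Finset.sum_congr rfl (fun x _ => e0 x)]
        exact Finset.sum_subset (Finset.Ico_subset_Ico le_rfl (by omega))
          (fun x hx hnx => entE_min_zero M hPC x (by simp [Finset.mem_Ico] at hx hnx; omega))
      rw [e1, e2]
    refine ⟨fun k => ?_, fun k => ?_, fun k hk => ?_⟩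
    · rw [rowsum_eq_Rts, colsum_eq_Cts, Rts_diag M hPC k 0, Cts_diag M hPC k 0,
        Nat.add_zero, cross k]
    · rw [rowsum_eq_Rts, rowsum_eq_Rts]
      have h1 := Req_of_PC M hPC (n - 0) k 0 le_rfl
      have h2 := Rts_rec M k 0
      have h3 : Rts M k 0 = entE M k 0 + Rts M k 1 := h2
      omega
    · rw [rowsum_eq_Rts, Rts_diag M hPC k 0, Nat.add_zero]
      refine Finset.sum_eq_zero (fun x hx => ?_)
      refine entE_min_zero M hPC x ?_
      simp [Finset.mem_Ico] at hx
      omega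

end FilteredRSK
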